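/- (Main theorem.) Let f : 2^V → ℝ be submodular, and let x be a fractional allocation: x(v,i) ≥ 0 and Σ_{i=1}^k x(v,i) = 1 for every v ∈ V. Define A(i,θ) = {v : x(v,i) ≥ θ}, A(θ) = ∪_{i=1}^k A(i,θ), U(θ) = V \ A(θ). Then for any δ ∈ [1/2, 1], Σ_{i=1}^k ∫_0^δ f(A(i,θ)) dθ ≥ (kδ − δ − 1) f(∅) + ∫_0^δ f(A(θ)) dθ + ∫_0^1 f(U(θ)) dθ. -/

import Mathlib

open MeasureTheory intervalIntegral List

namespace SubMPAux

set_option linter.unusedSectionVars false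

variable {V : Type*} [Fintype V]


lemma measurable_f_comp (f : Set V → ℝ) (P : V → ℝ → Prop)
    (hP : ∀ v, MeasurableSet {θ : ℝ | P v θ}) :
    Measurable fun θ : ℝ => f {v | P v θ} := by
  classical
  letI : MeasurableSpace (Set V) := ⊤
  haveI : MeasurableSingletonClass (Set V) := ⟨fun _ => trivial⟩
  have hT : Measurable fun θ : ℝ => ({v | P v θ} : Set V) := by
    apply measurable_to_countable'
    intro C
    have hset : (fun θ : ℝ => ({v | P v θ} : Set V)) ⁻¹' {C} =
        ⋂ v : V, (if v ∈ C then {θ | P v θ} else {θ | P v θ}ᶜ) := by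
      ext θ
      simp only [Set.mem_preimage, Set.mem_singleton_iff, Set.mem_iInter, Set.ext_iff,
        Set.mem_setOf_eq]
      constructor
      · intro h v
        have := h v
        by_cases hv : v ∈ C <;> simp [hv] at this ⊢ <;> tauto
      · intro h v
        have := h v
        by_cases hv : v ∈ C <;> simp [hv] at this ⊢ <;> tauto
    rw [hset]
    exact MeasurableSet.iInter fun v => by
      by_cases hv : v ∈ C <;> simp only [hv, if_true, if_false] <;>
        first
          | exact hP v
          | exact (hP v).compl
  exact Measurable.comp (measurable_from_top (f := f)) hT

lemma intervalIntegrable_f_comp (f : Set V → ℝ) (P : V → ℝ → Prop)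
    (hP : ∀ v, MeasurableSet {θ : ℝ | P v θ}) (a b : ℝ) :
    IntervalIntegrable (fun θ : ℝ => f {v | P v θ}) volume a b := by
  obtain ⟨M, hM⟩ := Finite.exists_le fun C : Set V => |f C|
  rw [intervalIntegrable_iff]
  refine Integrable.mono' (g := fun _ => M) ?_
    ((measurable_f_comp f P hP).aestronglyMeasurable.restrict)
    (Filter.Eventually.of_forall fun θ => hM _)
  exact integrableOn_const measure_Ioc_lt_top.ne



/-- truncated Lovász-type integral -/
noncomputable def Jf (f : Set V → ℝ) (w : V → ℝ) : ℝ :=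
  ∫ θ in (0:ℝ)..1, f {v | θ ≤ w v}

lemma II_le (f : Set V → ℝ) (w : V → ℝ) (a b : ℝ) :
    IntervalIntegrable (fun θ : ℝ => f {v | θ ≤ w v}) volume a b :=
  intervalIntegrable_f_comp f (fun v θ => θ ≤ w v) (fun v => measurableSet_Iic) a b

lemma II_union (f : Set V → ℝ) (y : V → ℝ) (L : List V) (S : Set V) (a b : ℝ) :
    IntervalIntegrable (fun θ : ℝ => f (S ∪ {u | u ∈ L ∧ θ ≤ y u})) volume a b := by
  classical
  have hrw : (fun θ : ℝ => f (S ∪ {u | u ∈ L ∧ θ ≤ y u}))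
      = fun θ : ℝ => f {v | v ∈ S ∨ (v ∈ L ∧ θ ≤ y v)} := by
    funext θ; rfl
  rw [hrw]
  apply intervalIntegrable_f_comp f (fun v θ => v ∈ S ∨ (v ∈ L ∧ θ ≤ y v))
  intro v
  by_cases h1 : v ∈ S
  · simp [h1]
  · by_cases h2 : v ∈ L
    · have : {θ : ℝ | v ∈ S ∨ (v ∈ L ∧ θ ≤ y v)} = Set.Iic (y v) := by
        ext θ; simp [h1, h2]
      rw [this]; exact measurableSet_Iic
    · have : {θ : ℝ | v ∈ S ∨ (v ∈ L ∧ θ ≤ y v)} = ∅ := by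
        ext θ; simp [h1, h2]
      rw [this]; exact MeasurableSet.empty

/-- greedy pay -/
noncomputable def gpay (f : Set V → ℝ) (y : V → ℝ) : List V → Set V → ℝ
  | [], _ => 0
  | v :: t, S => y v * (f (insert v S) - f S) + gpay f y t (insert v S)

lemma gpay_add (f : Set V → ℝ) (p q : V → ℝ) :
    ∀ (L : List V) (S : Set V),
      gpay f (fun v => p v + q v) L S = gpay f p L S + gpay f q L S
  | [], S => by simp [gpay]
  | v :: t, S => by simp only [gpay, gpay_add f p q t]; ring

lemma sorted_integral (f : Set V → ℝ) (y : V → ℝ) :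
    ∀ (L : List V) (S : Set V) (b : ℝ), 0 ≤ b →
      L.Pairwise (fun a c => y c ≤ y a) →
      (∀ u ∈ L, 0 ≤ y u) → (∀ u ∈ L, y u ≤ b) →
      (∫ θ in (0:ℝ)..b, f (S ∪ {u | u ∈ L ∧ θ ≤ y u})) = b * f S + gpay f y L S
  | [], S, b, hb, _, _, _ => by
    simp only [gpay, List.not_mem_nil, false_and, Set.setOf_false, Set.union_empty]
    rw [intervalIntegral.integral_const]
    simp [smul_eq_mul]
  | v :: t, S, b, hb, hs, hy0, hyb => by
    have hyv0 : 0 ≤ y v := hy0 v (by simp)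
    have hyvb : y v ≤ b := hyb v (by simp)
    have hrel : ∀ u ∈ t, y u ≤ y v := (List.pairwise_cons.mp hs).1
    have hsplit := intervalIntegral.integral_add_adjacent_intervals
      (II_union f y (v :: t) S 0 (y v)) (II_union f y (v :: t) S (y v) b)
    rw [← hsplit]
    have h2 : (∫ θ in (y v)..b, f (S ∪ {u | u ∈ v :: t ∧ θ ≤ y u})) = (b - y v) * f S := by
      rw [intervalIntegral.integral_of_le hyvb]
      rw [setIntegral_congr_fun measurableSet_Ioc (g := fun _ => f S)
        (fun θ hθ => by
          dsimp only
          congr 1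
          have hθ1 := hθ.1
          ext u
          simp only [Set.mem_union, Set.mem_setOf_eq, List.mem_cons]
          constructor
          · rintro (h | ⟨(rfl | hu), hle⟩)
            · exact h
            · linarith
            · exact absurd hle (by push_neg; exact lt_of_le_of_lt (hrel u hu) hθ1)
          · exact Or.inl)]
      simp [Real.volume_Ioc, ENNReal.toReal_ofReal (by linarith : (0:ℝ) ≤ b - y v)]
      exact Or.inl hyvb
    have h1 : (∫ θ in (0:ℝ)..(y v), f (S ∪ {u | u ∈ v :: t ∧ θ ≤ y u}))
        = ∫ θ in (0:ℝ)..(y v), f ((insert v S) ∪ {u | u ∈ t ∧ θ ≤ y u}) := by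
      rw [intervalIntegral.integral_of_le hyv0, intervalIntegral.integral_of_le hyv0]
      apply setIntegral_congr_fun measurableSet_Ioc
      intro θ hθ
      dsimp only
      congr 1
      ext u
      simp only [Set.mem_union, Set.mem_setOf_eq, List.mem_cons, Set.mem_insert_iff]
      constructor
      · rintro (h | ⟨(rfl | hu), hle⟩)
        · exact Or.inl (Or.inr h)
        · exact Or.inl (Or.inl rfl)
        · exact Or.inr ⟨hu, hle⟩
      · rintro ((rfl | h) | ⟨hu, hle⟩)
        · exact Or.inr ⟨Or.inl rfl, hθ.2⟩
        · exact Or.inl h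
        · exact Or.inr ⟨Or.inr hu, hle⟩
    rw [h1, sorted_integral f y t (insert v S) (y v) hyv0 (List.pairwise_cons.mp hs).2
      (fun u hu => hy0 u (by simp [hu])) hrel, h2]
    simp only [gpay]; ring


lemma J_zero (f : Set V → ℝ) : Jf f (fun _ => (0:ℝ)) = f ∅ := by
  unfold Jf
  rw [intervalIntegral.integral_of_le (by norm_num : (0:ℝ) ≤ 1)]
  rw [setIntegral_congr_fun measurableSet_Ioc (g := fun _ => f ∅)
    (fun θ hθ => by
      dsimp only; congr 1; ext v
      simp only [Set.mem_setOf_eq, Set.mem_empty_iff_false, iff_false]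
      push_neg
      exact hθ.1)]
  simp [Real.volume_Ioc]

lemma J_eq_gpay (f : Set V → ℝ) (w : V → ℝ) (hw0 : ∀ v, 0 ≤ w v) (hw1 : ∀ v, w v ≤ 1)
    (L : List V) (hL : ∀ v, v ∈ L) (hs : L.Pairwise fun a c => w c ≤ w a) :
    Jf f w = f ∅ + gpay f w L ∅ := by
  have h := sorted_integral f w L ∅ 1 (by norm_num) hs (fun u _ => hw0 u) (fun u _ => hw1 u)
  have hrw : (fun θ : ℝ => f ((∅ : Set V) ∪ {u | u ∈ L ∧ θ ≤ w u}))
      = fun θ : ℝ => f {v | θ ≤ w v} := by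
    funext θ; congr 1; ext u; simp [hL u]
  unfold Jf
  rw [show (fun θ : ℝ => f {v | θ ≤ w v}) = fun θ : ℝ => f ((∅:Set V) ∪ {u | u ∈ L ∧ θ ≤ w u})
    from hrw.symm] at *
  rw [h]
  ring

lemma gpay_le_sorted (f : Set V → ℝ)
    (hsub : ∀ A B : Set V, f A + f B ≥ f (A ∩ B) + f (A ∪ B)) (y : V → ℝ) :
    ∀ (n : ℕ) (L L₀ : List V) (S : Set V), L.length ≤ n → L₀.Perm L → L.Nodup →
      L₀.Pairwise (fun a c => y c ≤ y a) → (∀ u ∈ L, u ∉ S) →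
      gpay f y L S ≤ gpay f y L₀ S := by
  classical
  intro n
  induction n with
  | zero =>
    intro L L₀ S hlen hperm _ _ _
    have hL : L = [] := List.eq_nil_of_length_eq_zero (Nat.le_zero.mp hlen)
    subst hL
    have hL₀ : L₀ = [] := List.eq_nil_of_length_eq_zero (by simpa using hperm.length_eq)
    subst hL₀
    exact le_refl _
  | succ n ih =>
    intro L L₀ S hlen hperm hnd hs hdis
    match L, hnd, hdis, hlen, hperm with
    | [], _, _, _, hperm =>
      have hL₀ : L₀ = [] := List.eq_nil_of_length_eq_zero (by simpa using hperm.length_eq)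
      subst hL₀
      exact le_refl _
    | u :: t, hnd, hdis, hlen, hperm =>
      match L₀, hs, hperm with
      | [], _, hperm => exact absurd hperm.length_eq (by simp)
      | v0 :: t₀, hs, hperm =>
        have hndL₀ : (v0 :: t₀).Nodup := hperm.symm.nodup hnd
        have htnd : t.Nodup := (List.nodup_cons.mp hnd).2
        have hunt : u ∉ t := (List.nodup_cons.mp hnd).1
        have hut : ∀ a ∈ t, a ≠ u := fun a ha h => hunt (h ▸ ha)
        by_cases huv : u = v0
        · subst huv
          have hperm' : t₀.Perm t := hperm.cons_inv
          simp only [gpay]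
          have := ih t t₀ (insert u S) (Nat.le_of_succ_le_succ hlen) hperm' htnd
            (List.pairwise_cons.mp hs).2
            (fun a ha => by
              simp only [Set.mem_insert_iff]
              push_neg
              exact ⟨hut a ha, hdis a (List.mem_cons_of_mem u ha)⟩)
          linarith
        · have hu₀ : u ∈ t₀ := by
            have : u ∈ v0 :: t₀ := hperm.mem_iff.mpr (by simp)
            rcases List.mem_cons.mp this with h | h
            · exact absurd h huv
            · exact h
          have hv0t : v0 ∈ t := by
            have : v0 ∈ u :: t := hperm.subset (by simp)
            rcases List.mem_cons.mp this with h | h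
            · exact absurd h.symm huv
            · exact h
          have hv0S : v0 ∉ S := hdis v0 (List.mem_cons_of_mem u hv0t)
          have huS : u ∉ S := hdis u (by simp)
          have huv0 : u ≠ v0 := huv
          set r := t₀.erase u with hr
          have hperm2 : t₀.Perm (u :: r) := List.perm_cons_erase hu₀
          have hst₀ : t₀.Pairwise (fun a c => y c ≤ y a) := (List.pairwise_cons.mp hs).2
          have hsr : r.Pairwise (fun a c => y c ≤ y a) :=
            List.Pairwise.sublist (t₀.erase_sublist (a := u)) hst₀
          have hrsub : ∀ a ∈ r, a ∈ t₀ := fun a ha => (t₀.erase_sublist (a := u)).subset ha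
          have hsv0r : (v0 :: r).Pairwise (fun a c => y c ≤ y a) :=
            List.pairwise_cons.mpr ⟨fun a ha => (List.pairwise_cons.mp hs).1 a (hrsub a ha), hsr⟩
          have hpermA : (v0 :: r).Perm t := by
            have c1 : (u :: t).Perm (v0 :: u :: r) := hperm.symm.trans (hperm2.cons v0)
            have c2 : (u :: t).Perm (u :: v0 :: r) := c1.trans (List.Perm.swap u v0 r)
            exact (c2.cons_inv).symm
          have hyuv0 : y u ≤ y v0 := (List.pairwise_cons.mp hs).1 u hu₀
          -- notation
          have hv0nt₀ : v0 ∉ t₀ := (List.nodup_cons.mp hndL₀).1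
          -- Step A
          have stepA : gpay f y t (insert u S) ≤ gpay f y (v0 :: r) (insert u S) := by
            apply ih t (v0 :: r) (insert u S) (Nat.le_of_succ_le_succ hlen) hpermA htnd hsv0r
            intro a ha
            simp only [Set.mem_insert_iff]
            push_neg
            exact ⟨hut a ha, hdis a (List.mem_cons_of_mem u ha)⟩
          -- swap inequality
          have hSuSv : insert u S ∩ insert v0 S = S := by
            ext a
            simp only [Set.mem_inter_iff, Set.mem_insert_iff]
            constructor
            · rintro ⟨(rfl | h), (h2 | h2)⟩ <;> first | exact absurd h2 huv0 | assumption
            · exact fun h => ⟨Or.inr h, Or.inr h⟩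
          have hSuSv2 : insert u S ∪ insert v0 S = insert v0 (insert u S) := by
            ext a
            simp only [Set.mem_union, Set.mem_insert_iff]
            tauto
          have hkey : f (insert v0 (insert u S)) + f S ≤ f (insert u S) + f (insert v0 S) := by
            have := hsub (insert u S) (insert v0 S)
            rw [hSuSv, hSuSv2] at this
            linarith
          have hic : insert u (insert v0 S) = insert v0 (insert u S) := Set.insert_comm u v0 S
          have swap : y u * (f (insert u S) - f S)
                + y v0 * (f (insert v0 (insert u S)) - f (insert u S))
              ≤ y v0 * (f (insert v0 S) - f S)
                + y u * (f (insert v0 (insert u S)) - f (insert v0 S)) := by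
            nlinarith [mul_nonneg (sub_nonneg.mpr hyuv0)
              (sub_nonneg.mpr hkey)]
          -- Step B
          have hndur : (u :: r).Nodup := hperm2.nodup (hperm.symm.nodup hnd).of_cons
          have stepB : gpay f y (u :: r) (insert v0 S) ≤ gpay f y t₀ (insert v0 S) := by
            apply ih (u :: r) t₀ (insert v0 S) ?_ hperm2 hndur hst₀
            · intro a ha
              simp only [Set.mem_insert_iff]
              push_neg
              rcases List.mem_cons.mp ha with rfl | har
              · exact ⟨huv0, huS⟩
              · exact ⟨fun h => hv0nt₀ (h ▸ hrsub a har), hdis a (hperm.subset (List.mem_cons_of_mem v0 (hrsub a har)))⟩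
            · have hlt : t₀.length = t.length := by
                have := hperm.length_eq
                simpa using this
              have : (u :: r).length = t₀.length := hperm2.length_eq.symm
              rw [this, hlt]
              exact Nat.le_of_succ_le_succ hlen
          -- assemble
          simp only [gpay] at stepA stepB ⊢
          rw [hic] at stepB
          linarith

lemma J_subadd (f : Set V → ℝ)
    (hsub : ∀ A B : Set V, f A + f B ≥ f (A ∩ B) + f (A ∪ B))
    (p q : V → ℝ) (hp : ∀ v, 0 ≤ p v) (hq : ∀ v, 0 ≤ q v)
    (hpq : ∀ v, p v + q v ≤ 1) :
    Jf f (fun v => p v + q v) + f ∅ ≤ Jf f p + Jf f q := by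
  classical
  have hp1 : ∀ v, p v ≤ 1 := fun v => by have := hq v; have := hpq v; linarith
  have hq1 : ∀ v, q v ≤ 1 := fun v => by have := hp v; have := hpq v; linarith
  have hpq0 : ∀ v, 0 ≤ p v + q v := fun v => by have := hp v; have := hq v; linarith
  set base : List V := Finset.univ.toList with hbase
  have hbnd : base.Nodup := Finset.nodup_toList _
  have hbmem : ∀ v : V, v ∈ base := fun v => by simp [hbase]
  -- sorting helper
  have hsort : ∀ w : V → ℝ, ∃ L : List V, L.Perm base ∧ L.Nodup ∧ (∀ v : V, v ∈ L) ∧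
      L.Pairwise (fun a c => w c ≤ w a) := by
    intro w
    let r : V → V → Prop := fun a c => w c ≤ w a
    haveI : DecidableRel r := fun a c => Real.decidableLE _ _
    haveI : IsTotal V r := ⟨fun a c => le_total (w c) (w a)⟩
    haveI : IsTrans V r := ⟨fun a b c h1 h2 => le_trans h2 h1⟩
    refine ⟨List.insertionSort r base, List.perm_insertionSort r base, ?_, ?_,
      List.pairwise_insertionSort r base⟩
    · exact (List.perm_insertionSort r base).symm.nodup hbnd
    · intro v; rw [List.mem_insertionSort]; exact hbmem v
  obtain ⟨Lpq, hLpqp, hLpqnd, hLpqmem, hLpqs⟩ := hsort (fun v => p v + q v)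
  obtain ⟨Lp, hLpp, _, hLpmem, hLps⟩ := hsort p
  obtain ⟨Lq, hLqp, _, hLqmem, hLqs⟩ := hsort q
  have e1 : Jf f (fun v => p v + q v) = f ∅ + gpay f (fun v => p v + q v) Lpq ∅ :=
    J_eq_gpay f _ hpq0 hpq Lpq hLpqmem hLpqs
  have e2 : Jf f p = f ∅ + gpay f p Lp ∅ := J_eq_gpay f p hp hp1 Lp hLpmem hLps
  have e3 : Jf f q = f ∅ + gpay f q Lq ∅ := J_eq_gpay f q hq hq1 Lq hLqmem hLqs
  have l1 : gpay f p Lpq ∅ ≤ gpay f p Lp ∅ :=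
    gpay_le_sorted f hsub p Lpq.length Lpq Lp ∅ le_rfl (hLpp.trans hLpqp.symm) hLpqnd hLps
      (fun u _ => Set.notMem_empty u)
  have l2 : gpay f q Lpq ∅ ≤ gpay f q Lq ∅ :=
    gpay_le_sorted f hsub q Lpq.length Lpq Lq ∅ le_rfl (hLqp.trans hLpqp.symm) hLpqnd hLqs
      (fun u _ => Set.notMem_empty u)
  rw [e1, e2, e3, gpay_add]
  linarith

lemma J_lattice (f : Set V → ℝ)
    (hsub : ∀ A B : Set V, f A + f B ≥ f (A ∩ B) + f (A ∪ B)) (p q : V → ℝ) :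
    Jf f (fun v => max (p v) (q v)) + Jf f (fun v => min (p v) (q v)) ≤ Jf f p + Jf f q := by
  unfold Jf
  rw [← intervalIntegral.integral_add (II_le f _ 0 1) (II_le f _ 0 1),
    ← intervalIntegral.integral_add (II_le f p 0 1) (II_le f q 0 1)]
  apply intervalIntegral.integral_mono_on (by norm_num)
    ((II_le f _ 0 1).add (II_le f _ 0 1)) ((II_le f p 0 1).add (II_le f q 0 1))
  intro θ _
  have hU : {v | θ ≤ max (p v) (q v)} = {v | θ ≤ p v} ∪ {v | θ ≤ q v} := by
    ext v; simp [le_max_iff, Set.mem_union]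
  have hI : {v | θ ≤ min (p v) (q v)} = {v | θ ≤ p v} ∩ {v | θ ≤ q v} := by
    ext v; simp [le_min_iff, Set.mem_inter_iff]
  rw [hU, hI]
  have := hsub {v | θ ≤ p v} {v | θ ≤ q v}
  linarith

lemma le_foldr_max : ∀ (l : List ℝ) (b : ℝ), b ≤ l.foldr max b
  | [], b => le_refl b
  | x :: l, b => le_trans (le_foldr_max l b) (le_max_right x _)

lemma mem_le_foldr_max : ∀ (l : List ℝ) (b x : ℝ), x ∈ l → x ≤ l.foldr max b
  | [], _, _, h => absurd h List.not_mem_nil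
  | y :: l, b, x, h => by
    rcases List.mem_cons.mp h with rfl | h
    · exact le_max_left x _
    · exact le_trans (mem_le_foldr_max l b x h) (le_max_right y _)

lemma foldr_max_le : ∀ (l : List ℝ) (b c : ℝ), b ≤ c → (∀ x ∈ l, x ≤ c) → l.foldr max b ≤ c
  | [], b, c, hb, _ => hb
  | x :: l, b, c, hb, hx => by
    simp only [List.foldr_cons]
    exact max_le (hx x (by simp)) (foldr_max_le l b c hb (fun z hz => hx z (by simp [hz])))

lemma foldr_max_le_sum : ∀ (l : List ℝ) (b : ℝ), 0 ≤ b → (∀ x ∈ l, 0 ≤ x) →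
    l.foldr max b ≤ b + l.sum
  | [], b, _, _ => by simp
  | x :: l, b, hb, hx => by
    simp only [List.foldr_cons, List.sum_cons]
    have h1 := foldr_max_le_sum l b hb (fun z hz => hx z (by simp [hz]))
    have h2 : 0 ≤ l.sum := List.sum_nonneg (fun z hz => hx z (by simp [hz]))
    have h3 := hx x (by simp)
    exact max_le (by linarith) (by linarith)

lemma main_list (f : Set V → ℝ)
    (hsub : ∀ A B : Set V, f A + f B ≥ f (A ∩ B) + f (A ∪ B)) :
    ∀ (t : List (V → ℝ)) (w : V → ℝ), (∀ v, 0 ≤ w v) → (∀ u ∈ t, ∀ v, 0 ≤ u v) →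
      (∀ v, w v + (t.map (fun u => u v)).sum ≤ 1) →
      Jf f (fun v => (t.map (fun u => u v)).foldr max (w v))
        + Jf f (fun v => w v + (t.map (fun u => u v)).sum
            - (t.map (fun u => u v)).foldr max (w v))
        + ((t.length : ℝ) - 1) * f ∅
      ≤ Jf f w + (t.map (Jf f)).sum := by
  intro t
  induction t with
  | nil =>
    intro w hw _ _
    simp only [List.map_nil, List.foldr_nil, List.sum_nil, List.length_nil, Nat.cast_zero]
    have h1 : (fun v => w v + 0 - w v) = fun _ : V => (0:ℝ) := by funext v; ring
    have h2 : (fun v => w v) = w := rfl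
    rw [h1, h2, J_zero]
    linarith
  | cons u t iht =>
    intro w hw hcons hsum1
    have hu0 : ∀ v, 0 ≤ u v := hcons u (by simp)
    have ht0 : ∀ z ∈ t, ∀ v, 0 ≤ z v := fun z hz => hcons z (by simp [hz])
    have hmem0 : ∀ v, ∀ x ∈ (t.map (fun z => z v)), 0 ≤ x := by
      intro v x hx
      rcases List.mem_map.mp hx with ⟨z, hz, rfl⟩
      exact ht0 z hz v
    have hSt0 : ∀ v, 0 ≤ (t.map (fun z => z v)).sum :=
      fun v => List.sum_nonneg (hmem0 v)
    have hFw0 : ∀ v, 0 ≤ (t.map (fun z => z v)).foldr max (w v) :=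
      fun v => le_trans (hw v) (le_foldr_max _ _)
    have hFwle : ∀ v, (t.map (fun z => z v)).foldr max (w v)
        ≤ w v + (t.map (fun z => z v)).sum :=
      fun v => foldr_max_le_sum _ _ (hw v) (hmem0 v)
    have hsum1' : ∀ v, w v + (t.map (fun z => z v)).sum ≤ 1 := by
      intro v
      have := hsum1 v
      simp only [List.map_cons, List.sum_cons] at this
      have := hu0 v
      linarith
    have IH := iht w hw ht0 hsum1'
    simp only [List.map_cons, List.sum_cons, List.foldr_cons, List.length_cons]
    set Fw := fun v => (t.map (fun z => z v)).foldr max (w v) with hFw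
    set St := fun v => (t.map (fun z => z v)).sum with hSt
    have s1 := J_lattice f hsub u Fw
    have s2 := J_subadd f hsub (fun v => min (u v) (Fw v)) (fun v => w v + St v - Fw v)
      (fun v => le_min (hu0 v) (hFw0 v))
      (fun v => sub_nonneg.mpr (hFwle v))
      (fun v => by
        have h1 : min (u v) (Fw v) ≤ Fw v := min_le_right _ _
        have := hsum1' v
        linarith)
    have hident : (fun v => min (u v) (Fw v) + (w v + St v - Fw v))
        = fun v => w v + (u v + St v) - max (u v) (Fw v) := by
      funext v
      have h := min_add_max (u v) (Fw v)
      linarith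
    rw [hident] at s2
    push_cast
    linarith

lemma J_trunc (f : Set V → ℝ) (w : V → ℝ) (δ : ℝ) (h0 : 0 ≤ δ) (h1 : δ ≤ 1) :
    (∫ θ in (0:ℝ)..δ, f {v | θ ≤ w v})
      = Jf f (fun v => min (w v) δ) - (1 - δ) * f ∅ := by
  have hsplit := intervalIntegral.integral_add_adjacent_intervals
    (II_le f (fun v => min (w v) δ) 0 δ) (II_le f (fun v => min (w v) δ) δ 1)
  have p1 : (∫ θ in (0:ℝ)..δ, f {v | θ ≤ min (w v) δ})
      = ∫ θ in (0:ℝ)..δ, f {v | θ ≤ w v} := by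
    rw [intervalIntegral.integral_of_le h0, intervalIntegral.integral_of_le h0]
    apply setIntegral_congr_fun measurableSet_Ioc
    intro θ hθ
    dsimp only
    congr 1
    ext v
    simp only [Set.mem_setOf_eq, le_min_iff]
    exact ⟨fun h => h.1, fun h => ⟨h, hθ.2⟩⟩
  have p2 : (∫ θ in δ..(1:ℝ), f {v | θ ≤ min (w v) δ}) = (1 - δ) * f ∅ := by
    rw [intervalIntegral.integral_of_le h1]
    rw [setIntegral_congr_fun measurableSet_Ioc (g := fun _ => f ∅)
      (fun θ hθ => by
        dsimp only
        congr 1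
        ext v
        simp only [Set.mem_setOf_eq, Set.mem_empty_iff_false, iff_false]
        exact not_le.mpr (lt_of_le_of_lt (min_le_right _ _) hθ.1))]
    simp [Real.volume_Ioc, ENNReal.toReal_ofReal (by linarith : (0:ℝ) ≤ 1 - δ)]
    exact Or.inl h1
  unfold Jf
  rw [← hsplit, p1, p2]
  ring

lemma real_key {k : ℕ} (H : (Finset.univ : Finset (Fin k)).Nonempty)
    (a : Fin k → ℝ) (h0 : ∀ i, 0 ≤ a i) (h1 : ∑ i, a i = 1)
    (δ : ℝ) (hδl : 1/2 ≤ δ) (hδu : δ ≤ 1) :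
    (∑ i, min (a i) δ) - min (Finset.univ.sup' H a) δ = 1 - Finset.univ.sup' H a := by
  obtain ⟨is, _, his⟩ := Finset.exists_mem_eq_sup' H a
  set M := Finset.univ.sup' H a with hM
  have hMa : ∀ i, a i ≤ M := fun i => Finset.le_sup' a (Finset.mem_univ i)
  by_cases hcase : M ≤ δ
  · have hmin : ∀ i, min (a i) δ = a i := fun i => min_eq_left ((hMa i).trans hcase)
    rw [Finset.sum_congr rfl (fun i _ => hmin i), h1, min_eq_left hcase]
  · push_neg at hcase
    have hkey : ∀ i, i ≠ is → a i ≤ 1 - M := by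
      intro i hi
      have hpair : a i + a is = ∑ j ∈ ({i, is} : Finset (Fin k)), a j :=
        (Finset.sum_pair hi).symm
      have hle : ∑ j ∈ ({i, is} : Finset (Fin k)), a j ≤ ∑ j, a j :=
        Finset.sum_le_sum_of_subset_of_nonneg (Finset.subset_univ _)
          (fun j _ _ => h0 j)
      rw [h1] at hle
      linarith [hpair ▸ hle, his]
    have hd : 1 - M < δ := by linarith
    have hminis : min (a is) δ = δ := min_eq_right (by rw [← his]; exact le_of_lt hcase)
    have hsum : ∑ i, min (a i) δ
        = min (a is) δ + ∑ i ∈ Finset.univ.erase is, min (a i) δ :=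
      (Finset.add_sum_erase _ _ (Finset.mem_univ is)).symm
    have herase : ∑ i ∈ Finset.univ.erase is, min (a i) δ
        = ∑ i ∈ Finset.univ.erase is, a i := by
      apply Finset.sum_congr rfl
      intro i hi
      have hine : i ≠ is := (Finset.mem_erase.mp hi).1
      exact min_eq_left (by linarith [hkey i hine])
    have hsuma : a is + ∑ i ∈ Finset.univ.erase is, a i = 1 := by
      rw [Finset.add_sum_erase _ _ (Finset.mem_univ is), h1]
    rw [hsum, herase, hminis, min_eq_right (le_of_lt hcase)]
    linarith [hsuma, his]

end SubMPAux

open SubMPAux MeasureTheory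

/-- Main theorem: for submodular `f`, a fractional allocation `x`, and `δ ∈ [1/2, 1]`,
`Σ_{i=1}^k ∫_0^δ f(A(i,θ)) dθ ≥ (kδ − δ − 1) f(∅) + ∫_0^δ f(A(θ)) dθ + ∫_0^1 f(U(θ)) dθ`,
where `A(i,θ) = {v | x(v,i) ≥ θ}`, `A(θ) = ∪_i A(i,θ)`, `U(θ) = V \ A(θ)`. -/
theorem submp_main_theorem {V : Type*} [Fintype V] {k : ℕ} (hk : 1 ≤ k)
    (f : Set V → ℝ)
    (hsub : ∀ A B : Set V, f A + f B ≥ f (A ∩ B) + f (A ∪ B))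
    (x : V → Fin k → ℝ)
    (hx0 : ∀ v i, 0 ≤ x v i) (hxsum : ∀ v, ∑ i, x v i = 1)
    (δ : ℝ) (hδ : δ ∈ Set.Icc (1/2 : ℝ) 1) :
    ∑ i : Fin k, ∫ θ in (0:ℝ)..δ, f {v : V | θ ≤ x v i} ≥
      ((k : ℝ) * δ - δ - 1) * f (∅ : Set V)
        + (∫ θ in (0:ℝ)..δ, f {v : V | ∃ i : Fin k, θ ≤ x v i})
        + ∫ θ in (0:ℝ)..1, f {v : V | ∀ i : Fin k, x v i < θ} := by
  classical
  obtain ⟨hδl, hδu⟩ := hδ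
  have hδ0 : (0:ℝ) ≤ δ := le_trans (by norm_num) hδl
  obtain ⟨k', rfl⟩ : ∃ k', k = k' + 1 := ⟨k - 1, (Nat.succ_pred_eq_of_pos hk).symm⟩
  have H : (Finset.univ : Finset (Fin (k'+1))).Nonempty := ⟨0, Finset.mem_univ 0⟩
  set m : V → ℝ := fun v => Finset.univ.sup' H (x v) with hm
  have hx1 : ∀ v i, x v i ≤ 1 := fun v i => by
    have h := Finset.single_le_sum (f := x v) (fun j _ => hx0 v j) (Finset.mem_univ i)
    rw [hxsum v] at h; exact h
  set y : Fin (k'+1) → V → ℝ := fun i v => min (x v i) δ with hy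
  -- T1
  have T1 : ∀ i : Fin (k'+1), (∫ θ in (0:ℝ)..δ, f {v | θ ≤ x v i})
      = Jf f (y i) - (1 - δ) * f ∅ := fun i => J_trunc f (fun v => x v i) δ hδ0 hδu
  -- T2
  have hAset : ∀ θ : ℝ, {v : V | ∃ i, θ ≤ x v i} = {v : V | θ ≤ m v} := by
    intro θ; ext v
    simp only [Set.mem_setOf_eq, hm, Finset.le_sup'_iff]
    constructor
    · rintro ⟨i, hi⟩; exact ⟨i, Finset.mem_univ i, hi⟩
    · rintro ⟨i, _, hi⟩; exact ⟨i, hi⟩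
  have T2 : (∫ θ in (0:ℝ)..δ, f {v : V | ∃ i, θ ≤ x v i})
      = Jf f (fun v => min (m v) δ) - (1 - δ) * f ∅ := by
    simp only [hAset]
    exact J_trunc f m δ hδ0 hδu
  -- T3
  have hUset : ∀ θ : ℝ, {v : V | ∀ i, x v i < θ} = {v : V | m v < θ} := by
    intro θ; ext v
    simp only [Set.mem_setOf_eq, hm, Finset.sup'_lt_iff]
    constructor
    · intro h i _; exact h i
    · intro h i; exact h i (Finset.mem_univ i)
  have T3 : (∫ θ in (0:ℝ)..1, f {v : V | ∀ i, x v i < θ}) = Jf f (fun v => 1 - m v) := by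
    simp only [hUset]
    have hcomp := intervalIntegral.integral_comp_sub_left (a := (0:ℝ)) (b := 1)
      (fun θ => f {v : V | m v < θ}) 1
    norm_num at hcomp
    rw [← hcomp]
    rw [show Jf f (fun v => 1 - m v) = ∫ θ in (0:ℝ)..1, f {v : V | θ ≤ 1 - m v} from rfl]
    apply intervalIntegral.integral_congr_ae
    have hfin : (Set.range fun v : V => 1 - m v).Finite := Set.finite_range _
    have h0 : volume (Set.range fun v : V => 1 - m v) = 0 := hfin.measure_zero volume
    have hae : ∀ᵐ s : ℝ, s ∉ Set.range fun v : V => 1 - m v :=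
      measure_eq_zero_iff_ae_notMem.mp h0
    filter_upwards [hae] with s hs _
    congr 1
    ext v
    simp only [Set.mem_setOf_eq]
    constructor
    · intro h; linarith
    · intro h
      have hne : s ≠ 1 - m v := fun he => hs ⟨v, he.symm⟩
      have hlt : s < 1 - m v := lt_of_le_of_ne h hne
      linarith
  -- main inequality via main_list
  have hyp2 : ∀ u ∈ List.ofFn (fun i : Fin k' => y i.succ), ∀ v, 0 ≤ u v := by
    intro u hu v
    rcases List.mem_ofFn.mp hu with ⟨i, rfl⟩
    exact le_min (hx0 v i.succ) hδ0
  have hmapsum : ∀ v, ((List.ofFn (fun i : Fin k' => y i.succ)).map (fun u => u v)).sum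
      = ∑ i : Fin k', y i.succ v := by
    intro v
    rw [List.map_ofFn]
    exact List.sum_ofFn ..
  have hsumall : ∀ v, y 0 v + ∑ i : Fin k', y i.succ v = ∑ i : Fin (k'+1), y i v :=
    fun v => (Fin.sum_univ_succ (fun i => y i v)).symm
  have hyp3 : ∀ v, y 0 v + ((List.ofFn (fun i : Fin k' => y i.succ)).map (fun u => u v)).sum ≤ 1 := by
    intro v
    rw [hmapsum v, hsumall v]
    calc ∑ i : Fin (k'+1), y i v ≤ ∑ i : Fin (k'+1), x v i :=
          Finset.sum_le_sum (fun i _ => min_le_left _ _)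
    _ = 1 := hxsum v
  have M := main_list f hsub (List.ofFn (fun i : Fin k' => y i.succ)) (y 0)
    (fun v => le_min (hx0 v 0) hδ0) hyp2 hyp3
  -- identify the fold with min (m v) δ
  have hfold : ∀ v, ((List.ofFn (fun i : Fin k' => y i.succ)).map (fun u => u v)).foldr
      max (y 0 v) = min (m v) δ := by
    intro v
    rw [List.map_ofFn]
    apply _root_.le_antisymm
    · apply foldr_max_le
      · exact min_le_min (Finset.le_sup' _ (Finset.mem_univ 0)) le_rfl
      · intro z hz
        rcases List.mem_ofFn.mp hz with ⟨i, rfl⟩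
        exact min_le_min (Finset.le_sup' _ (Finset.mem_univ i.succ)) le_rfl
    · obtain ⟨is, _, his⟩ := Finset.exists_mem_eq_sup' H (x v)
      have hMy : min (m v) δ = y is v := by
        simp only [hm, hy]
        rw [his]
      rw [hMy]
      rcases Fin.eq_zero_or_eq_succ is with rfl | ⟨j, rfl⟩
      · exact le_foldr_max _ _
      · exact mem_le_foldr_max _ _ _ (List.mem_ofFn.mpr ⟨j, rfl⟩)
  have e1 : (fun v => ((List.ofFn (fun i : Fin k' => y i.succ)).map (fun u => u v)).foldr
      max (y 0 v)) = fun v => min (m v) δ := funext hfold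
  have e2 : (fun v => y 0 v + ((List.ofFn (fun i : Fin k' => y i.succ)).map (fun u => u v)).sum
      - ((List.ofFn (fun i : Fin k' => y i.succ)).map (fun u => u v)).foldr max (y 0 v))
      = fun v => 1 - m v := by
    funext v
    rw [hmapsum v, hfold v]
    have rk := real_key H (x v) (fun i => hx0 v i) (hxsum v) δ hδl hδu
    have hs2 := hsumall v
    simp only [hy, hm] at hs2 ⊢
    linarith [rk, hs2]
  have e3 : ((List.ofFn (fun i : Fin k' => y i.succ)).map (Jf f)).sum
      = ∑ i : Fin k', Jf f (y i.succ) := by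
    rw [List.map_ofFn]
    exact List.sum_ofFn ..
  have e4 : (List.ofFn (fun i : Fin k' => y i.succ)).length = k' := List.length_ofFn
  rw [e1, e2, e3, e4] at M
  -- LHS identity
  have hLHS : (∑ i : Fin (k'+1), ∫ θ in (0:ℝ)..δ, f {v : V | θ ≤ x v i})
      = Jf f (y 0) + (∑ i : Fin k', Jf f (y i.succ)) - ((k':ℝ)+1) * ((1-δ) * f ∅) := by
    rw [Finset.sum_congr rfl (fun i _ => T1 i), Finset.sum_sub_distrib, Finset.sum_const,
      Finset.card_univ, Fintype.card_fin, nsmul_eq_mul, Fin.sum_univ_succ]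
    push_cast
    ring
  rw [ge_iff_le, hLHS, T2, T3]
  push_cast
  linarith [M]
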